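/- Let n ≥ 1 and let R = (R_1,…,R_n) be a tuple of bounded linear operators on a complex Hilbert space L. Let K be the closed linear span of {R^α (R_i R_j − R_j R_i) h : h ∈ L, 1 ≤ i, j ≤ n, α a word}. If M is any closed subspace of L such that R_i^* M ⊆ M for all i and R_i^* R_j^* x = R_j^* R_i^* x for all x ∈ M and all 1 ≤ i, j ≤ n, then M ⊆ K^⊥. -/

import Mathlib

open ContinuousLinearMap

noncomputable def wordProd {n : ℕ} {L : Type*} [NormedAddCommGroup L] [InnerProductSpace ℂ L]
    (R : Fin n → L →L[ℂ] L) (α : List (Fin n)) : L →L[ℂ] L :=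
  (α.map R).prod

lemma wordProd_cons {n : ℕ} {L : Type*} [NormedAddCommGroup L] [InnerProductSpace ℂ L]
    (R : Fin n → L →L[ℂ] L) (a : Fin n) (α : List (Fin n)) (v : L) :
    wordProd R (a :: α) v = R a (wordProd R α v) := by
  simp [wordProd, List.prod_cons, ContinuousLinearMap.mul_apply]

/-- any closed subspace `M` that is invariant under all `R_i^*` and on
which the adjoints commute is contained in `K^⊥`, where `K` is the closed span of
`{R^α (R_iR_j - R_jR_i)h}`. -/
theorem stmt1 {n : ℕ} (hn : 1 ≤ n) {L : Type*} [NormedAddCommGroup L]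
    [InnerProductSpace ℂ L] [CompleteSpace L] (R : Fin n → L →L[ℂ] L)
    (K : Submodule ℂ L)
    (hK : K = (Submodule.span ℂ {y : L | ∃ (α : List (Fin n)) (i j : Fin n) (h : L),
      y = wordProd R α ((R i) ((R j) h) - (R j) ((R i) h))}).topologicalClosure)
    (M : Submodule ℂ L) (hMclosed : IsClosed (M : Set L))
    (hMinv : ∀ i : Fin n, ∀ x ∈ M, adjoint (R i) x ∈ M)
    (hMcomm : ∀ x ∈ M, ∀ i j : Fin n,
      adjoint (R i) (adjoint (R j) x) = adjoint (R j) (adjoint (R i) x)) :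
    M ≤ Kᗮ := by
  set S : Set L := {y : L | ∃ (α : List (Fin n)) (i j : Fin n) (h : L),
      y = wordProd R α ((R i) ((R j) h) - (R j) ((R i) h))} with hS
  have key : ∀ (α : List (Fin n)) (i j : Fin n) (h : L), ∀ x ∈ M,
      (inner ℂ (wordProd R α ((R i) ((R j) h) - (R j) ((R i) h))) x : ℂ) = 0 := by
    intro α
    induction α with
    | nil =>
      intro i j h x hx
      have : wordProd R [] ((R i) ((R j) h) - (R j) ((R i) h))
          = (R i) ((R j) h) - (R j) ((R i) h) := by simp [wordProd]
      rw [this, inner_sub_left,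
        ← ContinuousLinearMap.adjoint_inner_right (R i) ((R j) h) x,
        ← ContinuousLinearMap.adjoint_inner_right (R j) ((R i) h) x,
        ← ContinuousLinearMap.adjoint_inner_right (R j) h _,
        ← ContinuousLinearMap.adjoint_inner_right (R i) h _,
        hMcomm x hx j i]
      ring
    | cons a α ih =>
      intro i j h x hx
      rw [wordProd_cons, ← ContinuousLinearMap.adjoint_inner_right (R a)]
      exact ih i j h _ (hMinv a x hx)
  intro x hx
  have hxS : x ∈ (Submodule.span ℂ S)ᗮ := by
    rw [Submodule.mem_orthogonal]
    intro u hu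
    induction hu using Submodule.span_induction with
    | mem y hy =>
      obtain ⟨α, i, j, h, rfl⟩ := hy
      exact key α i j h x hx
    | zero => simp
    | add u v _ _ hu hv => rw [inner_add_left, hu, hv, add_zero]
    | smul c u _ hu => rw [inner_smul_left, hu, mul_zero]
  rw [hK, ← Submodule.orthogonal_orthogonal_eq_closure]
  exact Submodule.le_orthogonal_orthogonal _ hxS
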